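/- Let V = (V_1,…,V_k) be subsets of {1,…,n} such that M_V has rank k over K, with Grassmann necklace elements I_1,…,I_n, and let R(V) ∈ ℝ[x] be the product of the distinct prime factors of ∏_{a=1}^{n} Δ_{I_a}(x). For every real evaluation x̂ of the variables, with A = M_V(x̂) the evaluated real k×n matrix: (a) every set of columns of A that is linearly independent over ℝ is independent in the column matroid M(V); (b) R(V)(x̂) = 0 if and only if Δ_{I_a}(x̂) = 0 for some a; (c) if A has rank k and R(V)(x̂) = 0, then the column matroid of A is strictly contained in M(V), and in particular differs from M(V). -/

import Mathlib

open MvPolynomial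

/-- The polynomial ring `ℝ[x_{i,j}]` in `k·n` independent variables. -/
abbrev PR (k n : ℕ) : Type := MvPolynomial (Fin k × Fin n) ℝ

/-- Its field of fractions `K`. -/
abbrev FF (k n : ℕ) : Type := FractionRing (PR k n)

/-- The variable-valued matrix `M_V` with polynomial entries: the `(i,j)` entry is
`x_{i,j}` if `j ∈ V_i` and `0` otherwise. -/
noncomputable def MVpoly (k n : ℕ) (V : Fin k → Finset (Fin n)) :
    Matrix (Fin k) (Fin n) (PR k n) :=
  Matrix.of fun i j => if j ∈ V i then X (i, j) else 0

/-- The variable-valued matrix `M_V` over the field `K`. -/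
noncomputable def MV (k n : ℕ) (V : Fin k → Finset (Fin n)) :
    Matrix (Fin k) (Fin n) (FF k n) :=
  Matrix.of fun i j => algebraMap (PR k n) (FF k n) (MVpoly k n V i j)

/-- Linear independence over `F` of the columns of a matrix indexed by a set `S`. -/
def ColsIndep {k n : ℕ} {F : Type*} [Field F] (M : Matrix (Fin k) (Fin n) F)
    (S : Finset (Fin n)) : Prop :=
  LinearIndependent F (fun j : {x : Fin n // x ∈ S} => fun i : Fin k => M i (j : Fin n))

/-- The minor `Δ_S(x) ∈ ℝ[x]` of `M_V` on a `k`-element set `S` of columns (and `0`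
if `S` does not have `k` elements); well defined up to the sign of the chosen
enumeration of `S`. -/
noncomputable def minorF (k n : ℕ) (V : Fin k → Finset (Fin n))
    (S : Finset (Fin n)) : PR k n :=
  if h : S.card = k then
    ((MVpoly k n V).submatrix id
      (fun i : Fin k => ((S.equivFin.symm (Fin.cast h.symm i)) : Fin n))).det
  else 0

/-- The position of `x` in the cyclic order `<ₐ` starting at `a`. -/
def keyF (n : ℕ) (a x : Fin n) : ℕ := ((x : ℕ) + n - (a : ℕ)) % n

/-- The Gale order `≤ₐ` associated to the cyclic shift `<ₐ`:  `S ≤ₐ T` iff the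
sorted lists of positions agree in length and are pointwise `≤`. -/
def GaleLEat (n : ℕ) (a : Fin n) (S T : Finset (Fin n)) : Prop :=
  List.Forall₂ (· ≤ ·)
    ((S.image (keyF n a)).sort (· ≤ ·)) ((T.image (keyF n a)).sort (· ≤ ·))

/-- `S` is a basis of columns of `M_V`: it has `k` elements and its maximal minor is
nonzero. -/
def IsBasisF (k n : ℕ) (V : Fin k → Finset (Fin n)) (S : Finset (Fin n)) : Prop :=
  S.card = k ∧ minorF k n V S ≠ 0

/-- `S` is the Grassmann necklace element `I_a`: the `≤ₐ`-least basis. -/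
def NecklaceAt (k n : ℕ) (V : Fin k → Finset (Fin n)) (a : Fin n)
    (S : Finset (Fin n)) : Prop :=
  IsBasisF k n V S ∧ ∀ T : Finset (Fin n), IsBasisF k n V T → GaleLEat n a S T

/-- `S` is the reverse Grassmann necklace element `I*_a`: the `≤ₐ`-greatest basis. -/
def CoNecklaceAt (k n : ℕ) (V : Fin k → Finset (Fin n)) (a : Fin n)
    (S : Finset (Fin n)) : Prop :=
  IsBasisF k n V S ∧ ∀ T : Finset (Fin n), IsBasisF k n V T → GaleLEat n a T S

/-- The column matroid `M(V)` is a positroid of rank `k`: some real `k×n` matrix of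
rank `k` with all (column-ordered) `k×k` minors nonnegative has exactly the same
linearly independent column sets as `M_V`. -/
def IsPositroidRep (k n : ℕ) (V : Fin k → Finset (Fin n)) : Prop :=
  ∃ A : Matrix (Fin k) (Fin n) ℝ, A.rank = k ∧
    (∀ f : Fin k → Fin n, StrictMono f → 0 ≤ (A.submatrix id f).det) ∧
    (∀ S : Finset (Fin n), ColsIndep A S ↔ ColsIndep (MV k n V) S)

/-- The real matrix obtained by evaluating the entries of `M_V` at real values `x̂`. -/
noncomputable def evalMat (k n : ℕ) (V : Fin k → Finset (Fin n))
    (xhat : Fin k × Fin n → ℝ) : Matrix (Fin k) (Fin n) ℝ :=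
  Matrix.of fun i j => eval xhat (MVpoly k n V i j)


open Matrix

section AuxS10
variable {F : Type*} [Field F]

/-- If the columns of a `k × m` matrix over a field are linearly independent, then some
`m` rows form an invertible square submatrix. -/
lemma exists_rows_det_ne_zero {k m : ℕ} (C : Matrix (Fin k) (Fin m) F)
    (h : LinearIndependent F (fun j : Fin m => fun i : Fin k => C i j)) :
    ∃ f : Fin m → Fin k, Function.Injective f ∧ (C.submatrix f id).det ≠ 0 := by
  have hct : LinearIndependent F Cᵀ := h
  have hrank : Cᵀ.rank = m := by
    have h5 := hct.rank_matrix
    simp only [Fintype.card_fin] at h5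
    exact h5
  have hspan : Submodule.span F (Set.range C) = ⊤ := by
    apply Submodule.eq_top_of_finrank_eq
    have h2 := Cᵀ.rank_eq_finrank_span_cols
    change Cᵀ.rank = Module.finrank F (Submodule.span F (Set.range C)) at h2
    rw [← h2, hrank, Module.finrank_pi]
    simp
  obtain ⟨b, hbs, hbspan, hbind⟩ := exists_linearIndependent F (Set.range C)
  rw [hspan] at hbspan
  haveI : Fintype b := ((Set.finite_range C).subset hbs).fintype
  let B : Module.Basis b F (Fin m → F) := Module.Basis.mk hbind (by rw [Subtype.range_val, hbspan])
  have hcard : Fintype.card b = m := by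
    have h3 := Module.finrank_eq_card_basis B
    rw [Module.finrank_pi] at h3
    simpa using h3.symm
  let e : Fin m ≃ b := (Fintype.equivFinOfCardEq hcard).symm
  have hchoose : ∀ x : b, ∃ i : Fin k, C i = (x : Fin m → F) := fun x => hbs x.2
  choose g hg using hchoose
  refine ⟨fun p => g (e p), ?_, ?_⟩
  · intro p q hpq
    have hv : ((e p : b) : Fin m → F) = ((e q : b) : Fin m → F) := by
      rw [← hg (e p), ← hg (e q)]
      exact congrArg C hpq
    exact e.injective (Subtype.ext hv)
  · have hind : LinearIndependent F fun p : Fin m => (C.submatrix (fun p => g (e p)) id) p := by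
      have h4 : (fun p : Fin m => (C.submatrix (fun p => g (e p)) id) p)
          = fun p => ((e p : b) : Fin m → F) := funext fun p => hg (e p)
      rw [h4]
      exact hbind.comp (fun p => e p) fun p q hpq => e.injective hpq
    exact isUnit_iff_ne_zero.mp
      ((Matrix.isUnit_iff_isUnit_det _).mp (Matrix.linearIndependent_rows_iff_isUnit.mp hind))

/-- Columns indexed by `S` are independent iff some square submatrix on the enumeration of `S`
has nonzero determinant. -/
lemma colsIndep_iff_exists {k n : ℕ} (M : Matrix (Fin k) (Fin n) F) (S : Finset (Fin n)) :
    ColsIndep M S ↔ ∃ f : Fin S.card → Fin k, Function.Injective f ∧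
      (M.submatrix f (fun p : Fin S.card =>
        ((S.equivFin.symm p : {x : Fin n // x ∈ S}) : Fin n))).det ≠ 0 := by
  unfold ColsIndep
  rw [← linearIndependent_equiv S.equivFin.symm]
  constructor
  · intro h
    exact exists_rows_det_ne_zero _ h
  · rintro ⟨f, -, hdet⟩
    have h1 : LinearIndependent F fun j : Fin S.card =>
        (M.submatrix f (fun p : Fin S.card =>
          ((S.equivFin.symm p : {x : Fin n // x ∈ S}) : Fin n)))ᵀ j :=
      Matrix.linearIndependent_cols_iff_isUnit.mpr
        ((Matrix.isUnit_iff_isUnit_det _).mpr (isUnit_iff_ne_zero.mpr hdet))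
    exact h1.of_comp (LinearMap.funLeft F F f)

/-- For a `k`-element set, column independence is equivalent to the nonvanishing of the
full maximal minor. -/
lemma colsIndep_square_iff {k n : ℕ} (M : Matrix (Fin k) (Fin n) F) (S : Finset (Fin n))
    (h : S.card = k) :
    ColsIndep M S ↔ (M.submatrix id (fun i : Fin k =>
      ((S.equivFin.symm (Fin.cast h.symm i) : {x : Fin n // x ∈ S}) : Fin n))).det ≠ 0 := by
  unfold ColsIndep
  rw [← linearIndependent_equiv ((finCongr h.symm).trans S.equivFin.symm)]
  constructor
  · intro hli
    have h1 := Matrix.linearIndependent_cols_iff_isUnit.mp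
      (show LinearIndependent F (fun i : Fin k => (M.submatrix id (fun i : Fin k =>
        ((S.equivFin.symm (Fin.cast h.symm i) : {x : Fin n // x ∈ S}) : Fin n)))ᵀ i) from hli)
    exact isUnit_iff_ne_zero.mp ((Matrix.isUnit_iff_isUnit_det _).mp h1)
  · intro hdet
    exact Matrix.linearIndependent_cols_iff_isUnit.mpr
      ((Matrix.isUnit_iff_isUnit_det _).mpr (isUnit_iff_ne_zero.mpr hdet))

end AuxS10

/-- let `M_V` have rank `k`, with Grassmann necklace `I`, and let
`R(V)` be the product of the distinct prime factors of `∏_a Δ_{I_a}(x)` (i.e. a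
generator of the radical of the principal ideal generated by this product).  For
every real evaluation `x̂`, with `A = M_V(x̂)`:
(a) every ℝ-independent column set of `A` is independent in the column matroid of `M_V`;
(b) `R(V)(x̂) = 0` iff some necklace minor vanishes at `x̂`;
(c) if `A` has rank `k` and `R(V)(x̂) = 0`, then the column matroid of `A` is strictly
contained in that of `M_V`. -/
theorem statement10 (k n : ℕ) (V : Fin k → Finset (Fin n))
    (hrank : (MV k n V).rank = k)
    (I : Fin n → Finset (Fin n)) (hI : ∀ a : Fin n, NecklaceAt k n V a (I a))
    (RV : PR k n)
    (hRV : Ideal.span {RV} = (Ideal.span {∏ a : Fin n, minorF k n V (I a)}).radical)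
    (xhat : Fin k × Fin n → ℝ) :
    (∀ S : Finset (Fin n),
        ColsIndep (evalMat k n V xhat) S → ColsIndep (MV k n V) S) ∧
    (eval xhat RV = 0 ↔ ∃ a : Fin n, eval xhat (minorF k n V (I a)) = 0) ∧
    ((evalMat k n V xhat).rank = k → eval xhat RV = 0 →
      ((∀ S : Finset (Fin n),
          ColsIndep (evalMat k n V xhat) S → ColsIndep (MV k n V) S) ∧
        ∃ S : Finset (Fin n),
          ColsIndep (MV k n V) S ∧ ¬ ColsIndep (evalMat k n V xhat) S)) := by
  classical
  -- determinant of an evaluated/embedded submatrix is the image of the polynomial determinant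
  have hEvalDet : ∀ {m : ℕ} (f : Fin m → Fin k) (g : Fin m → Fin n),
      ((evalMat k n V xhat).submatrix f g).det
        = eval xhat (((MVpoly k n V).submatrix f g).det) := by
    intro m f g
    rw [RingHom.map_det]
    congr 1
  have hMVDet : ∀ {m : ℕ} (f : Fin m → Fin k) (g : Fin m → Fin n),
      ((MV k n V).submatrix f g).det
        = algebraMap (PR k n) (FF k n) (((MVpoly k n V).submatrix f g).det) := by
    intro m f g
    rw [RingHom.map_det]
    congr 1
  have hinj : Function.Injective (algebraMap (PR k n) (FF k n)) :=
    IsFractionRing.injective (PR k n) (FF k n)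
  -- part (a)
  have parta : ∀ S : Finset (Fin n),
      ColsIndep (evalMat k n V xhat) S → ColsIndep (MV k n V) S := by
    intro S hS
    obtain ⟨f, hf, hdet⟩ := (colsIndep_iff_exists _ S).mp hS
    refine (colsIndep_iff_exists _ S).mpr ⟨f, hf, ?_⟩
    have hpoly : ((MVpoly k n V).submatrix f (fun p : Fin S.card =>
        ((S.equivFin.symm p : {x : Fin n // x ∈ S}) : Fin n))).det ≠ 0 := by
      intro h0
      apply hdet
      rw [hEvalDet, h0, _root_.map_zero]
    rw [hMVDet]
    intro h0
    exact hpoly (hinj (by rw [h0, _root_.map_zero]))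
  -- part (b)
  have hPmem : (∏ a : Fin n, minorF k n V (I a)) ∈ Ideal.span {RV} := by
    rw [hRV]
    exact Ideal.le_radical (Ideal.mem_span_singleton_self _)
  obtain ⟨c, hc⟩ := Ideal.mem_span_singleton.mp hPmem
  have hRVmem : RV ∈ (Ideal.span {∏ a : Fin n, minorF k n V (I a)}).radical := by
    rw [← hRV]; exact Ideal.mem_span_singleton_self _
  obtain ⟨m, hm⟩ := Ideal.mem_radical_iff.mp hRVmem
  obtain ⟨d, hd⟩ := Ideal.mem_span_singleton.mp hm
  have partb : eval xhat RV = 0 ↔ ∃ a : Fin n, eval xhat (minorF k n V (I a)) = 0 := by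
    constructor
    · intro h0
      have hP0 : eval xhat (∏ a : Fin n, minorF k n V (I a)) = 0 := by
        rw [hc, _root_.map_mul, h0, zero_mul]
      rw [_root_.map_prod] at hP0
      obtain ⟨a, -, ha⟩ := Finset.prod_eq_zero_iff.mp hP0
      exact ⟨a, ha⟩
    · rintro ⟨a, ha⟩
      have hP0 : eval xhat (∏ a : Fin n, minorF k n V (I a)) = 0 := by
        rw [_root_.map_prod]
        exact Finset.prod_eq_zero (Finset.mem_univ a) ha
      have h0 : (eval xhat RV) ^ m = 0 := by
        rw [← _root_.map_pow, hd, _root_.map_mul, hP0, zero_mul]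
      rcases Nat.eq_zero_or_pos m with hm0 | hm0
      · rw [hm0, pow_zero] at h0
        exact absurd h0 one_ne_zero
      · exact pow_eq_zero_iff hm0.ne' |>.mp h0
  refine ⟨parta, partb, ?_⟩
  intro _ hR0
  refine ⟨parta, ?_⟩
  obtain ⟨a, ha⟩ := partb.mp hR0
  have hbasis := (hI a).1
  obtain ⟨hcard, hmin⟩ := hbasis
  have hminor : minorF k n V (I a) = ((MVpoly k n V).submatrix id
      (fun i : Fin k => (((I a).equivFin.symm (Fin.cast hcard.symm i)
        : {x : Fin n // x ∈ I a}) : Fin n))).det := by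
    rw [minorF, dif_pos hcard]
  refine ⟨I a, ?_, ?_⟩
  · rw [colsIndep_square_iff _ _ hcard, hMVDet]
    intro h0
    apply hmin
    rw [hminor]
    exact hinj (by rw [h0, _root_.map_zero])
  · rw [colsIndep_square_iff _ _ hcard, hEvalDet]
    intro h0
    apply h0
    rw [← hminor]
    exact ha
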